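/- Let K ⊆ ℝ^d be a nonempty closed convex set, ℓ^(1),…,ℓ^(T) ∈ ℝ^d loss vectors, m^(1),…,m^(T+1) ∈ ℝ^d prediction vectors, and for each t = 1,…,T+1 let ψ^(t) : ℝ^d → ℝ be convex and differentiable, and let x^(t) be a minimizer over K of x ↦ ⟨x, m^(t) + Σ_{s=1}^{t−1} ℓ^(s)⟩ + ψ^(t)(x). Then for every x* ∈ K: Σ_{t=1}^T ⟨x^(t) − x*, ℓ^(t)⟩ ≤ ψ^(T+1)(x*) − ψ^(1)(x^(1)) + Σ_{t=1}^T ( ψ^(t)(x^(t+1)) − ψ^(t+1)(x^(t+1)) ) + Σ_{t=1}^T ( ⟨x^(t) − x^(t+1), ℓ^(t) − m^(t)⟩ − D_{ψ^(t)}(x^(t+1), x^(t)) ) + ⟨x* − x^(T+1), m^(T+1)⟩. -/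

import Mathlib

open Finset

noncomputable section

/-- The `(d-1)`-dimensional probability simplex in `ℝ^d`. -/
def simplex (d : ℕ) : Set (Fin d → ℝ) :=
  {x | (∀ k, 0 ≤ x k) ∧ ∑ k, x k = 1}

/-- Standard inner product on `ℝ^d`. -/
def inp {d : ℕ} (u v : Fin d → ℝ) : ℝ := ∑ k, u k * v k

/-- `ℓ¹` norm. -/
def l1 {d : ℕ} (v : Fin d → ℝ) : ℝ := ∑ k, |v k|

/-- `ℓ∞` norm. -/
def linf {d : ℕ} (v : Fin d → ℝ) : ℝ := ⨆ k, |v k|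

/-- Matrix-vector product `A y`. -/
def mvec {d e : ℕ} (A : Fin d → Fin e → ℝ) (v : Fin e → ℝ) : Fin d → ℝ :=
  fun i => ∑ j, A i j * v j

/-- Transposed matrix-vector product `Aᵀ x`. -/
def tvec {d e : ℕ} (A : Fin d → Fin e → ℝ) (v : Fin d → ℝ) : Fin e → ℝ :=
  fun j => ∑ i, A i j * v i

/-- Row-stochastic matrices. -/
def rowStoch {m : ℕ} (M : Fin m → Fin m → ℝ) : Prop :=
  ∀ a, M a ∈ simplex m

/-- Shannon entropy. -/
def shannonH {d : ℕ} (x : Fin d → ℝ) : ℝ := ∑ k, x k * Real.log (1 / x k)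

/-- Log-barrier regularizer. -/
def logBarrier {d : ℕ} (x : Fin d → ℝ) : ℝ := -∑ k, Real.log (x k)

/-- Local norm `‖h‖_{x,φ}` induced by the Hessian of the log-barrier at `x`. -/
def locNorm {d : ℕ} (x h : Fin d → ℝ) : ℝ := Real.sqrt (∑ k, (h k) ^ 2 / (x k) ^ 2)

/-- Dual local norm `‖h‖_{*,x,φ}` for the log-barrier at `x`. -/
def dualLocNorm {d : ℕ} (x h : Fin d → ℝ) : ℝ := Real.sqrt (∑ k, (x k) ^ 2 * (h k) ^ 2)

/-- `log₊ z = max (log z) 4`. -/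
def logp (z : ℕ) : ℝ := max (Real.log z) 4


section Aux

open Filter Topology

lemma inp_sub_left {d : ℕ} (u v w : Fin d → ℝ) : inp (u - v) w = inp u w - inp v w := by
  simp [inp, sub_mul, Finset.sum_sub_distrib]

lemma inp_add_right {d : ℕ} (u v w : Fin d → ℝ) : inp u (v + w) = inp u v + inp u w := by
  simp [inp, mul_add, Finset.sum_add_distrib]

lemma inp_sub_right {d : ℕ} (u v w : Fin d → ℝ) : inp u (v - w) = inp u v - inp u w := by
  simp [inp, mul_sub, Finset.sum_sub_distrib]

lemma inp_zero_right {d : ℕ} (u : Fin d → ℝ) : inp u 0 = 0 := by simp [inp]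

lemma inp_sum_right {d : ℕ} (u : Fin d → ℝ) {α : Type*} (s : Finset α) (f : α → Fin d → ℝ) :
    inp u (∑ t ∈ s, f t) = ∑ t ∈ s, inp u (f t) := by
  simp only [inp, Finset.sum_apply, Finset.mul_sum]
  exact Finset.sum_comm

lemma deriv_nonneg_of_isMinOn {d : ℕ} {K : Set (Fin d → ℝ)} (hK : Convex ℝ K)
    {f : (Fin d → ℝ) → ℝ} (hf : Differentiable ℝ f)
    {x0 z : Fin d → ℝ} (hx0 : x0 ∈ K) (hz : z ∈ K)
    (hmin : ∀ y ∈ K, f x0 ≤ f y) :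
    0 ≤ fderiv ℝ f x0 (z - x0) := by
  set v := z - x0 with hv
  set g : ℝ → ℝ := fun s => f (x0 + s • v) with hgdef
  have hg0 : HasDerivAt g (fderiv ℝ f x0 v) 0 := by
    have h1 : HasDerivAt (fun s : ℝ => x0 + s • v) v 0 := by
      simpa using ((hasDerivAt_id (0 : ℝ)).smul_const v).const_add x0
    have h2 : HasFDerivAt f (fderiv ℝ f x0) ((fun s : ℝ => x0 + s • v) 0) := by
      simpa using (hf x0).hasFDerivAt
    have := h2.comp_hasDerivAt 0 h1; exact this
  have hs : Tendsto (slope g 0) (𝓝[>] 0) (𝓝 (fderiv ℝ f x0 v)) :=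
    (hasDerivAt_iff_tendsto_slope.mp hg0).mono_left
      (nhdsWithin_mono _ (fun s hs => ne_of_gt hs))
  refine ge_of_tendsto hs ?_
  filter_upwards [Ioo_mem_nhdsGT_of_mem (Set.mem_Ico.mpr ⟨le_refl (0:ℝ), one_pos⟩)] with s hs'
  obtain ⟨hs0, hs1⟩ := hs'
  have hmem : x0 + s • v ∈ K := hK.add_smul_sub_mem hx0 hz ⟨le_of_lt hs0, le_of_lt hs1⟩
  have hle : g 0 ≤ g s := by
    have := hmin _ hmem
    simpa [hgdef] using this
  rw [slope_def_field]
  have : (0:ℝ) < s - 0 := by linarith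
  exact div_nonneg (by linarith) (by linarith)

lemma key_opt {d : ℕ} {K : Set (Fin d → ℝ)} (hK : Convex ℝ K)
    {ψ : (Fin d → ℝ) → ℝ} (hψ : Differentiable ℝ ψ) (g : Fin d → ℝ)
    {x0 z : Fin d → ℝ} (hx0 : x0 ∈ K) (hz : z ∈ K)
    (hmin : ∀ y ∈ K, inp x0 g + ψ x0 ≤ inp y g + ψ y) :
    0 ≤ inp (z - x0) g + fderiv ℝ ψ x0 (z - x0) := by
  set L : (Fin d → ℝ) →L[ℝ] ℝ := ∑ k, g k • ContinuousLinearMap.proj k with hL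
  have hLapp : ∀ w : Fin d → ℝ, L w = inp w g := by
    intro w
    simp [hL, inp, ContinuousLinearMap.sum_apply, mul_comm]
  have hfun : (fun w : Fin d → ℝ => inp w g) = fun w => L w :=
    funext fun w => (hLapp w).symm
  have hlin : ∀ y : Fin d → ℝ, HasFDerivAt (fun w : Fin d → ℝ => inp w g) L y := by
    intro y
    rw [hfun]
    exact L.hasFDerivAt
  have hF : HasFDerivAt (fun w : Fin d → ℝ => inp w g + ψ w) (L + fderiv ℝ ψ x0) x0 :=
    (hlin x0).add (hψ x0).hasFDerivAt
  have hdiff : Differentiable ℝ (fun w : Fin d → ℝ => inp w g + ψ w) :=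
    fun y => ((hlin y).add (hψ y).hasFDerivAt).differentiableAt
  have h := deriv_nonneg_of_isMinOn hK hdiff hx0 hz hmin
  rw [hF.fderiv] at h
  simpa [ContinuousLinearMap.add_apply, hLapp] using h

end Aux

/-- general regret bound for optimistic FTRL (Lemma `oftrl_bound`).
The Bregman divergence `D_{ψ^(t)}(x^(t+1), x^(t))` is written out using `fderiv`. -/
theorem oftrl_general_bound
    (d T : ℕ) (K : Set (Fin d → ℝ))
    (hKne : K.Nonempty) (hKcl : IsClosed K) (hKconv : Convex ℝ K)
    (ℓ mp : ℕ → Fin d → ℝ)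
    (ψ : ℕ → (Fin d → ℝ) → ℝ)
    (hψconv : ∀ t ∈ Finset.Icc 1 (T + 1), ConvexOn ℝ Set.univ (ψ t))
    (hψdiff : ∀ t ∈ Finset.Icc 1 (T + 1), Differentiable ℝ (ψ t))
    (x : ℕ → Fin d → ℝ)
    (hx : ∀ t ∈ Finset.Icc 1 (T + 1), x t ∈ K ∧
      ∀ z ∈ K,
        inp (x t) (mp t + ∑ s ∈ Finset.Icc 1 (t - 1), ℓ s) + ψ t (x t)
          ≤ inp z (mp t + ∑ s ∈ Finset.Icc 1 (t - 1), ℓ s) + ψ t z) :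
    ∀ xs ∈ K,
      ∑ t ∈ Finset.Icc 1 T, inp (x t - xs) (ℓ t)
        ≤ ψ (T + 1) xs - ψ 1 (x 1)
          + (∑ t ∈ Finset.Icc 1 T, (ψ t (x (t + 1)) - ψ (t + 1) (x (t + 1))))
          + (∑ t ∈ Finset.Icc 1 T,
              (inp (x t - x (t + 1)) (ℓ t - mp t)
                - (ψ t (x (t + 1)) - ψ t (x t)
                    - fderiv ℝ (ψ t) (x t) (x (t + 1) - x t))))
          + inp (xs - x (T + 1)) (mp (T + 1)) := by
  intro xs hxs
  have key : ∀ n : ℕ, n ≤ T →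
      ∑ t ∈ Finset.Icc 1 n, inp (x t) (ℓ t)
        ≤ inp (x (n+1)) (∑ s ∈ Finset.Icc 1 n, ℓ s) + ψ (n+1) (x (n+1)) - ψ 1 (x 1)
          + (∑ t ∈ Finset.Icc 1 n, (ψ t (x (t+1)) - ψ (t+1) (x (t+1))))
          + (∑ t ∈ Finset.Icc 1 n,
              (inp (x t - x (t+1)) (ℓ t - mp t)
                - (ψ t (x (t+1)) - ψ t (x t)
                    - fderiv ℝ (ψ t) (x t) (x (t+1) - x t)))) := by
    intro n
    induction n with
    | zero =>
      intro _
      simp [inp_zero_right]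
    | succ n ih =>
      intro hn
      have hnT : n ≤ T := Nat.le_of_succ_le hn
      have ihn := ih hnT
      have hmem1 : n + 1 ∈ Finset.Icc 1 (T+1) := by
        simp only [Finset.mem_Icc]; omega
      have hmem2 : n + 1 + 1 ∈ Finset.Icc 1 (T+1) := by
        simp only [Finset.mem_Icc]; omega
      obtain ⟨hx1K, hx1min⟩ := hx (n+1) hmem1
      obtain ⟨hx2K, _⟩ := hx (n+1+1) hmem2
      have hψd : Differentiable ℝ (ψ (n+1)) := hψdiff (n+1) hmem1
      have hmin' : ∀ y ∈ K,
          inp (x (n+1)) (mp (n+1) + ∑ s ∈ Finset.Icc 1 n, ℓ s) + ψ (n+1) (x (n+1))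
            ≤ inp y (mp (n+1) + ∑ s ∈ Finset.Icc 1 n, ℓ s) + ψ (n+1) y := by
        simpa using hx1min
      have hopt := key_opt hKconv hψd (mp (n+1) + ∑ s ∈ Finset.Icc 1 n, ℓ s) hx1K hx2K hmin'
      have hsplit1 : ∑ t ∈ Finset.Icc 1 (n+1), inp (x t) (ℓ t)
          = (∑ t ∈ Finset.Icc 1 n, inp (x t) (ℓ t)) + inp (x (n+1)) (ℓ (n+1)) :=
        Finset.sum_Icc_succ_top (by omega) _
      have hsplit2 : ∑ t ∈ Finset.Icc 1 (n+1), (ψ t (x (t+1)) - ψ (t+1) (x (t+1)))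
          = (∑ t ∈ Finset.Icc 1 n, (ψ t (x (t+1)) - ψ (t+1) (x (t+1))))
            + (ψ (n+1) (x (n+1+1)) - ψ (n+1+1) (x (n+1+1))) :=
        Finset.sum_Icc_succ_top (by omega) _
      have hsplit3 : ∑ t ∈ Finset.Icc 1 (n+1),
            (inp (x t - x (t+1)) (ℓ t - mp t)
              - (ψ t (x (t+1)) - ψ t (x t) - fderiv ℝ (ψ t) (x t) (x (t+1) - x t)))
          = (∑ t ∈ Finset.Icc 1 n,
              (inp (x t - x (t+1)) (ℓ t - mp t)
                - (ψ t (x (t+1)) - ψ t (x t) - fderiv ℝ (ψ t) (x t) (x (t+1) - x t))))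
            + (inp (x (n+1) - x (n+1+1)) (ℓ (n+1) - mp (n+1))
                - (ψ (n+1) (x (n+1+1)) - ψ (n+1) (x (n+1))
                    - fderiv ℝ (ψ (n+1)) (x (n+1)) (x (n+1+1) - x (n+1)))) :=
        Finset.sum_Icc_succ_top (by omega) _
      have hSsum : (∑ s ∈ Finset.Icc 1 (n+1), ℓ s) = (∑ s ∈ Finset.Icc 1 n, ℓ s) + ℓ (n+1) :=
        Finset.sum_Icc_succ_top (by omega) _
      rw [hsplit1, hsplit2, hsplit3, hSsum]
      simp only [inp_add_right, inp_sub_left, inp_sub_right] at hopt ihn ⊢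
      linarith [ihn, hopt]
  have hT := key T le_rfl
  obtain ⟨hxTK, hxTmin⟩ := hx (T+1) (by simp only [Finset.mem_Icc]; omega)
  have hfin := hxTmin xs hxs
  simp only [Nat.add_sub_cancel] at hfin
  have hgoalL : ∑ t ∈ Finset.Icc 1 T, inp (x t - xs) (ℓ t)
      = (∑ t ∈ Finset.Icc 1 T, inp (x t) (ℓ t)) - inp xs (∑ s ∈ Finset.Icc 1 T, ℓ s) := by
    rw [inp_sum_right, ← Finset.sum_sub_distrib]
    exact Finset.sum_congr rfl fun t _ => inp_sub_left _ _ _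
  rw [hgoalL]
  simp only [inp_add_right, inp_sub_left, inp_sub_right] at hfin hT ⊢
  linarith [hT, hfin]
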